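/- If G is a graph on n vertices (n even) with minimum degree at least n/2, then G has a perfect matching. -/

import Mathlib

open Finset

namespace DiracPMAux

variable {V : Type*} [Fintype V] [DecidableEq V]

/-- `S` is a matching in `G`: a set of edges of `G` that are pairwise vertex-disjoint. -/
def IsM (G : SimpleGraph V) (S : Finset (Sym2 V)) : Prop :=
  (∀ e ∈ S, e ∈ G.edgeSet) ∧ ∀ e ∈ S, ∀ f ∈ S, e ≠ f → ∀ z, z ∈ e → z ∉ f

lemma IsM.subset {G : SimpleGraph V} {S T : Finset (Sym2 V)} (hTS : T ⊆ S) (hS : IsM G S) :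
    IsM G T :=
  ⟨fun e he => hS.1 e (hTS he),
   fun e he f hf hef z hze => hS.2 e (hTS he) f (hTS hf) hef z hze⟩

lemma isM_insert {G : SimpleGraph V} [DecidableRel G.Adj] {S : Finset (Sym2 V)}
    (hS : IsM G S) {a b : V} (hab : G.Adj a b)
    (ha : ∀ e ∈ S, a ∉ e) (hb : ∀ e ∈ S, b ∉ e) :
    IsM G (insert s(a, b) S) := by
  constructor
  · intro e he
    rcases mem_insert.mp he with rfl | he
    · exact (SimpleGraph.mem_edgeSet G).mpr hab
    · exact hS.1 e he
  · intro e he f hf hef z hze hzf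
    rcases mem_insert.mp he with rfl | he'
    · rcases mem_insert.mp hf with rfl | hf'
      · exact hef rfl
      · rcases Sym2.mem_iff.mp hze with rfl | rfl
        · exact ha f hf' hzf
        · exact hb f hf' hzf
    · rcases mem_insert.mp hf with rfl | hf'
      · rcases Sym2.mem_iff.mp hzf with rfl | rfl
        · exact ha e he' hze
        · exact hb e he' hze
      · exact hS.2 e he' f hf' hef z hze hzf

/-- The (an) edge of `S` containing `z`, if one exists. -/
noncomputable def phi (S : Finset (Sym2 V)) (z : V) : Sym2 V :=
  if h : ∃ e ∈ S, z ∈ e then h.choose else s(z, z)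

lemma phi_mem {S : Finset (Sym2 V)} {z : V} (h : ∃ e ∈ S, z ∈ e) :
    phi S z ∈ S ∧ z ∈ phi S z := by
  rw [phi, dif_pos h]
  exact ⟨h.choose_spec.1, h.choose_spec.2⟩

lemma phi_eq {G : SimpleGraph V} {S : Finset (Sym2 V)} (hS : IsM G S) {z : V} {e : Sym2 V}
    (he : e ∈ S) (hz : z ∈ e) : phi S z = e := by
  have h : ∃ e ∈ S, z ∈ e := ⟨e, he, hz⟩
  obtain ⟨h1, h2⟩ := phi_mem h
  by_contra hne
  exact hS.2 _ h1 _ he hne z h2 hz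

lemma card_filter_mem_le (e : Sym2 V) : (univ.filter (· ∈ e)).card ≤ 2 := by
  induction e using Sym2.ind with
  | _ x y =>
    have hsub : univ.filter (· ∈ s(x, y)) ⊆ {x, y} := by
      intro z hz
      simp only [mem_filter, Sym2.mem_iff] at hz
      simpa using hz.2
    exact (card_le_card hsub).trans ((card_insert_le _ _).trans (by simp))

end DiracPMAux

open DiracPMAux Finset in
/-- If `G` is a graph on `n` vertices (`n` even) with minimum degree at least `n/2`,
then `G` has a perfect matching. -/
theorem stmt_0 {V : Type*} [Fintype V] [DecidableEq V] (G : SimpleGraph V)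
    [DecidableRel G.Adj] (heven : Even (Fintype.card V))
    (hdeg : ∀ v : V, Fintype.card V ≤ 2 * G.degree v) :
    ∃ M : G.Subgraph, M.IsPerfectMatching := by
  classical
  set n := Fintype.card V with hn
  -- the finset of matchings
  set 𝓢 : Finset (Finset (Sym2 V)) := G.edgeFinset.powerset.filter (IsM G) with h𝓢
  have hne : 𝓢.Nonempty := ⟨∅, by simp [h𝓢, IsM]⟩
  obtain ⟨S, hSmem, hSmax⟩ := Finset.exists_max_image 𝓢 Finset.card hne
  have hS : IsM G S := (mem_filter.mp hSmem).2
  have hSmax' : ∀ T : Finset (Sym2 V), IsM G T → T.card ≤ S.card := by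
    intro T hT
    exact hSmax T (mem_filter.mpr
      ⟨mem_powerset.mpr (fun e he => SimpleGraph.mem_edgeFinset.mpr (hT.1 e he)), hT⟩)
  -- any two vertices not covered by S cannot be adjacent (else we could extend S)
  have extend : ∀ a b : V, G.Adj a b → (∀ e ∈ S, a ∉ e) → (∀ e ∈ S, b ∉ e) → False := by
    intro a b hab ha hb
    have h1 : IsM G (insert s(a, b) S) := isM_insert hS hab ha hb
    have h2 : s(a, b) ∉ S := fun h => ha _ h (Sym2.mem_mk_left a b)
    have := hSmax' _ h1
    rw [card_insert_of_notMem h2] at this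
    omega
  -- key claim: S covers every vertex
  have key : ∀ v : V, ∃ e ∈ S, v ∈ e := by
    by_contra hkey
    push_neg at hkey
    obtain ⟨u, hu⟩ := hkey
    have covNbr : ∀ a : V, (∀ e ∈ S, a ∉ e) → ∀ b : V, G.Adj a b → ∃ e ∈ S, b ∈ e := by
      intro a ha b hab
      by_contra hb
      push_neg at hb
      exact extend a b hab ha hb
    set cov : Finset V := univ.filter (fun z => ∃ e ∈ S, z ∈ e) with hcov
    -- cov.card ≤ 2 * S.card
    have hfib := Finset.card_eq_sum_card_fiberwise
      (f := phi S) (s := cov) (t := S)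
      (fun z hz => (phi_mem (mem_filter.mp hz).2).1)
    have hcovle : cov.card ≤ 2 * S.card := by
      rw [hfib]
      calc ∑ e ∈ S, (cov.filter (fun z => phi S z = e)).card
          ≤ ∑ _e ∈ S, 2 := by
            apply sum_le_sum
            intro e he
            refine le_trans (card_le_card ?_) (card_filter_mem_le e)
            intro z hz
            obtain ⟨hz1, hz2⟩ := mem_filter.mp hz
            have := (phi_mem (mem_filter.mp hz1).2).2
            rw [hz2] at this
            simpa using this
        _ = 2 * S.card := by rw [sum_const, smul_eq_mul, mul_comm]
    have hcovge : 2 * S.card ≤ cov.card := by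
      rw [hfib]
      have : ∀ e ∈ S, 2 ≤ (cov.filter (fun z => phi S z = e)).card := by
        intro e he
        have hadj : e ∈ G.edgeSet := hS.1 e he
        revert hadj
        induction e using Sym2.ind with
        | _ x y =>
          intro hadj
          rw [SimpleGraph.mem_edgeSet] at hadj
          have hxmem : x ∈ cov.filter (fun z => phi S z = s(x, y)) := by
            refine mem_filter.mpr ⟨mem_filter.mpr ⟨mem_univ _, ⟨_, he, Sym2.mem_mk_left x y⟩⟩,
              phi_eq hS he (Sym2.mem_mk_left x y)⟩
          have hymem : y ∈ cov.filter (fun z => phi S z = s(x, y)) := by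
            refine mem_filter.mpr ⟨mem_filter.mpr ⟨mem_univ _, ⟨_, he, Sym2.mem_mk_right x y⟩⟩,
              phi_eq hS he (Sym2.mem_mk_right x y)⟩
          calc 2 = ({x, y} : Finset V).card := (card_pair hadj.ne).symm
            _ ≤ _ := card_le_card (by intro z hz; rcases mem_insert.mp hz with rfl | hz
                                      · exact hxmem
                                      · rw [mem_singleton.mp hz]; exact hymem)
      calc 2 * S.card = ∑ _e ∈ S, 2 := by rw [sum_const, smul_eq_mul, mul_comm]
        _ ≤ _ := sum_le_sum this
    -- u is uncovered
    have hucov : u ∉ cov := by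
      simp only [hcov, mem_filter, mem_univ, true_and]
      push_neg
      exact hu
    have hnpos : 0 < n := Fintype.card_pos_iff.mpr ⟨u⟩
    have hcovn : cov.card ≤ n - 1 := by
      have : cov ⊆ univ.erase u := fun z hz => mem_erase.mpr ⟨fun h => hucov (h ▸ hz), mem_univ _⟩
      have := card_le_card this
      rwa [card_erase_of_mem (mem_univ u), card_univ] at this
    obtain ⟨k, hk⟩ := heven
    have hSn : 2 * S.card + 2 ≤ n := by omega
    -- find a second uncovered vertex
    have hcompl : 1 < covᶜ.card := by
      rw [card_compl]
      have := card_univ (α := V)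
      omega
    obtain ⟨v, hvmem, hvu⟩ := Finset.exists_mem_ne hcompl u
    have hv : ∀ e ∈ S, v ∉ e := by
      have := mem_compl.mp hvmem
      simp only [hcov, mem_filter, mem_univ, true_and] at this
      push_neg at this
      exact this
    -- fibers of neighborhoods
    set A : Finset V := G.neighborFinset u with hA
    set B : Finset V := G.neighborFinset v with hB
    have hAc : ∀ z ∈ A, ∃ e ∈ S, z ∈ e := fun z hz =>
      covNbr u hu z ((SimpleGraph.mem_neighborFinset G u z).mp hz)
    have hBc : ∀ z ∈ B, ∃ e ∈ S, z ∈ e := fun z hz =>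
      covNbr v hv z ((SimpleGraph.mem_neighborFinset G v z).mp hz)
    have hAfib := Finset.card_eq_sum_card_fiberwise
      (f := phi S) (s := A) (t := S) (fun z hz => (phi_mem (hAc z hz)).1)
    have hBfib := Finset.card_eq_sum_card_fiberwise
      (f := phi S) (s := B) (t := S) (fun z hz => (phi_mem (hBc z hz)).1)
    have hdegsum : n ≤ A.card + B.card := by
      have h1 := hdeg u
      have h2 := hdeg v
      rw [← SimpleGraph.card_neighborFinset_eq_degree] at h1 h2
      rw [hA, hB]
      omega
    have hsum : 2 * S.card + 2 ≤
        ∑ e ∈ S, ((A.filter (fun z => phi S z = e)).card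
          + (B.filter (fun z => phi S z = e)).card) := by
      rw [sum_add_distrib, ← hAfib, ← hBfib]
      exact le_trans hSn hdegsum
    -- pigeonhole: some matching edge gets ≥ 3 incidences
    obtain ⟨e, he, he3⟩ : ∃ e ∈ S, 2 < (A.filter (fun z => phi S z = e)).card
        + (B.filter (fun z => phi S z = e)).card := by
      by_contra h
      push_neg at h
      have := sum_le_sum h
      rw [sum_const, smul_eq_mul, mul_comm] at this
      omega
    have heedge : e ∈ G.edgeSet := hS.1 e he
    revert he he3 heedge
    induction e using Sym2.ind with
    | _ x y =>
      intro he he3 heedge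
      rw [SimpleGraph.mem_edgeSet] at heedge
      have hxy : x ≠ y := heedge.ne
      -- augmenting step: replace s(x,y) by two edges through u and v
      have swap : ∀ x' y' : V, s(x', y') = s(x, y) → G.Adj u y' → G.Adj v x' → False := by
        intro x' y' hexy huy hvx
        have hy'e : y' ∈ s(x, y) := hexy ▸ Sym2.mem_mk_right x' y'
        have hx'e : x' ∈ s(x, y) := hexy ▸ Sym2.mem_mk_left x' y'
        have hx'y' : x' ≠ y' := by
          have : s(x', y') ∈ G.edgeSet := hexy ▸ heedge
          exact ((SimpleGraph.mem_edgeSet G).mp this).ne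
        set T := S.erase s(x, y) with hT
        have hTS : IsM G T := IsM.subset (erase_subset _ _) hS
        have hy' : ∀ f ∈ T, y' ∉ f := fun f hf =>
          hS.2 _ he _ (mem_erase.mp hf).2 (fun h => (mem_erase.mp hf).1 h.symm) y' hy'e
        have hx' : ∀ f ∈ T, x' ∉ f := fun f hf =>
          hS.2 _ he _ (mem_erase.mp hf).2 (fun h => (mem_erase.mp hf).1 h.symm) x' hx'e
        have huT : ∀ f ∈ T, u ∉ f := fun f hf => hu f (mem_erase.mp hf).2
        have hvT : ∀ f ∈ T, v ∉ f := fun f hf => hv f (mem_erase.mp hf).2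
        have hT1 : IsM G (insert s(u, y') T) := isM_insert hTS huy huT hy'
        have hvy' : v ≠ y' := fun h => hv _ he (h ▸ hy'e)
        have hux' : u ≠ x' := fun h => hu _ he (h ▸ hx'e)
        have hvnot : ∀ f ∈ insert s(u, y') T, v ∉ f := by
          intro f hf
          rcases mem_insert.mp hf with rfl | hf
          · rw [Sym2.mem_iff]
            push_neg
            exact ⟨hvu, hvy'⟩
          · exact hvT f hf
        have hx'not : ∀ f ∈ insert s(u, y') T, x' ∉ f := by
          intro f hf
          rcases mem_insert.mp hf with rfl | hf
          · rw [Sym2.mem_iff]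
            push_neg
            exact ⟨fun h => hux' h.symm, hx'y'⟩
          · exact hx' f hf
        have hT2 : IsM G (insert s(v, x') (insert s(u, y') T)) :=
          isM_insert hT1 hvx hvnot hx'not
        have hc1 : s(u, y') ∉ T := fun h => huT _ h (Sym2.mem_mk_left _ _)
        have hc2 : s(v, x') ∉ insert s(u, y') T := fun h => hvnot _ h (Sym2.mem_mk_left _ _)
        have := hSmax' _ hT2
        rw [card_insert_of_notMem hc2, card_insert_of_notMem hc1,
          card_erase_of_mem he] at this
        have hSpos : 1 ≤ S.card := card_pos.mpr ⟨_, he⟩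
        omega
      -- case analysis on the fibers
      have hfibA : A.filter (fun z => phi S z = s(x, y)) ⊆ {x, y} := by
        intro z hz
        obtain ⟨hz1, hz2⟩ := mem_filter.mp hz
        have := (phi_mem (hAc z hz1)).2
        rw [hz2] at this
        simpa using this
      have hfibB : B.filter (fun z => phi S z = s(x, y)) ⊆ {x, y} := by
        intro z hz
        obtain ⟨hz1, hz2⟩ := mem_filter.mp hz
        have := (phi_mem (hBc z hz1)).2
        rw [hz2] at this
        simpa using this
      have hcard2 : ({x, y} : Finset V).card = 2 := card_pair hxy
      have hAle : (A.filter (fun z => phi S z = s(x, y))).card ≤ 2 :=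
        hcard2 ▸ card_le_card hfibA
      have hBle : (B.filter (fun z => phi S z = s(x, y))).card ≤ 2 :=
        hcard2 ▸ card_le_card hfibB
      have hmemA : ∀ z, z ∈ A.filter (fun w => phi S w = s(x, y)) → G.Adj u z := by
        intro z hz
        exact (SimpleGraph.mem_neighborFinset G u z).mp (mem_filter.mp hz).1
      have hmemB : ∀ z, z ∈ B.filter (fun w => phi S w = s(x, y)) → G.Adj v z := by
        intro z hz
        exact (SimpleGraph.mem_neighborFinset G v z).mp (mem_filter.mp hz).1
      rcases Nat.lt_or_ge (A.filter (fun z => phi S z = s(x, y))).card 2 with hA2 | hA2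
      · -- then B's fiber has card 2, and A's fiber is nonempty
        have hB2 : (B.filter (fun z => phi S z = s(x, y))).card = 2 := by omega
        have hBeq : B.filter (fun z => phi S z = s(x, y)) = {x, y} :=
          eq_of_subset_of_card_le hfibB (by omega)
        have hvx : G.Adj v x := hmemB x (hBeq ▸ mem_insert_self x {y})
        have hvy : G.Adj v y := hmemB y (hBeq ▸ mem_insert_of_mem (mem_singleton_self y))
        have hApos : 0 < (A.filter (fun z => phi S z = s(x, y))).card := by omega
        obtain ⟨z, hz⟩ := card_pos.mp hApos
        have huz : G.Adj u z := hmemA z hz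
        rcases mem_insert.mp (hfibA hz) with rfl | hz'
        · exact swap y z Sym2.eq_swap huz hvy
        · rw [mem_singleton.mp hz'] at huz
          exact swap x y rfl huz hvx
      · -- A's fiber has card 2, B's fiber is nonempty
        have hAeq : A.filter (fun z => phi S z = s(x, y)) = {x, y} :=
          eq_of_subset_of_card_le hfibA (by omega)
        have hux : G.Adj u x := hmemA x (hAeq ▸ mem_insert_self x {y})
        have huy : G.Adj u y := hmemA y (hAeq ▸ mem_insert_of_mem (mem_singleton_self y))
        have hBpos : 0 < (B.filter (fun z => phi S z = s(x, y))).card := by omega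
        obtain ⟨z, hz⟩ := card_pos.mp hBpos
        have hvz : G.Adj v z := hmemB z hz
        rcases mem_insert.mp (hfibB hz) with rfl | hz'
        · exact swap z y rfl huy hvz
        · rw [mem_singleton.mp hz'] at hvz
          exact swap y x Sym2.eq_swap hux hvz
  -- build the perfect matching subgraph from S
  refine ⟨⟨Set.univ, fun a b => s(a, b) ∈ S, ?_, fun {a b} _ => Set.mem_univ a, ?_⟩,
    ?_, fun v => Set.mem_univ v⟩
  · intro a b h
    exact (SimpleGraph.mem_edgeSet G).mp (hS.1 _ h)
  · refine ⟨fun a b h => ?_⟩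
    exact Sym2.eq_swap ▸ h
  · intro v _
    obtain ⟨e, he, hve⟩ := key v
    obtain ⟨w, rfl⟩ := Sym2.mem_iff_exists.mp hve
    refine ⟨w, he, ?_⟩
    intro y hy
    have heq : s(v, y) = s(v, w) := by
      by_contra hne
      exact hS.2 _ hy _ he hne v (Sym2.mem_mk_left v y) (Sym2.mem_mk_left v w)
    exact Sym2.congr_right.mp heq
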